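/- Let X = ℝ^n, Ω ⊆ ℝ^n, x̄ ∈ Ω, f_i : ℝ^n → ℝ locally Lipschitz at x̄, and suppose 0 ∈ int U_i for each i ∈ I. If x̄ is a local highly robust weakly efficient solution of (P_U), then T(x̄; Ω) ∩ { d : ⟨x*, d⟩ ≤ 0 for all x* ∈ ∂f_i(x̄) and all i ∈ I } = {0}, where ∂f_i is the Mordukhovich subdifferential and T(x̄; Ω) is the contingent cone. -/

import Mathlib

open Filter Topology
open MeasureTheory

/-- Fréchet subdifferential of `f : ℝⁿ → ℝ` at `x`. -/
def frechetSubdiff {n : ℕ} (f : EuclideanSpace ℝ (Fin n) → ℝ)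
    (x : EuclideanSpace ℝ (Fin n)) : Set (EuclideanSpace ℝ (Fin n)) :=
  {v | ∀ ε > (0 : ℝ), ∀ᶠ y in 𝓝 x,
    -ε * ‖y - x‖ ≤ f y - f x - (inner ℝ v (y - x) : ℝ)}

/-- Mordukhovich (limiting) subdifferential of `f : ℝⁿ → ℝ` at `x`. -/
def limitingSubdiff {n : ℕ} (f : EuclideanSpace ℝ (Fin n) → ℝ)
    (x : EuclideanSpace ℝ (Fin n)) : Set (EuclideanSpace ℝ (Fin n)) :=
  {v | ∃ xs vs : ℕ → EuclideanSpace ℝ (Fin n),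
    (∀ k, vs k ∈ frechetSubdiff f (xs k)) ∧
    Tendsto xs atTop (𝓝 x) ∧ Tendsto vs atTop (𝓝 v)}

/-- Contingent cone to `Ω` at `x`. -/
def contingentCone {n : ℕ} (x : EuclideanSpace ℝ (Fin n))
    (Ω : Set (EuclideanSpace ℝ (Fin n))) : Set (EuclideanSpace ℝ (Fin n)) :=
  {d | ∃ (xs : ℕ → EuclideanSpace ℝ (Fin n)) (ts : ℕ → ℝ),
    (∀ k, xs k ∈ Ω) ∧ (∀ k, 0 < ts k) ∧ Tendsto ts atTop (𝓝 0) ∧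
    Tendsto (fun k => (ts k)⁻¹ • (xs k - x)) atTop (𝓝 d)}

lemma fderiv_mem_frechetSubdiff {n : ℕ} {g : EuclideanSpace ℝ (Fin n) → ℝ}
    {z : EuclideanSpace ℝ (Fin n)} (hg : DifferentiableAt ℝ g z) :
    (InnerProductSpace.toDual ℝ (EuclideanSpace ℝ (Fin n))).symm (fderiv ℝ g z)
      ∈ frechetSubdiff g z := by
  intro ε hε
  have h2 := hg.hasFDerivAt.isLittleO.bound hε
  filter_upwards [h2] with y hy
  have hv : (inner ℝ ((InnerProductSpace.toDual ℝ (EuclideanSpace ℝ (Fin n))).symm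
      (fderiv ℝ g z)) (y - z) : ℝ) = fderiv ℝ g z (y - z) :=
    InnerProductSpace.toDual_symm_apply
  rw [hv]
  have h3 : |g y - g z - fderiv ℝ g z (y - z)| ≤ ε * ‖y - z‖ := by
    simpa [Real.norm_eq_abs] using hy
  nlinarith [abs_le.1 h3]

lemma frechetSubdiff_congr {n : ℕ} {f g : EuclideanSpace ℝ (Fin n) → ℝ}
    {z v : EuclideanSpace ℝ (Fin n)} (hfg : f =ᶠ[𝓝 z] g)
    (hv : v ∈ frechetSubdiff g z) : v ∈ frechetSubdiff f z := by
  intro ε hε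
  have hz : f z = g z := hfg.eq_of_nhds
  filter_upwards [hv ε hε, hfg] with y h1 h2
  rw [h2, hz]; exact h1


lemma exists_diff_point {n : ℕ} {g : EuclideanSpace ℝ (Fin n) → ℝ} {K : NNReal}
    (hg : LipschitzWith K g) (a b : EuclideanSpace ℝ (Fin n)) {c θ : ℝ} (hθ : 0 < θ)
    (hc : c ≤ g b - g a) :
    ∃ z, dist z a ≤ dist b a + θ ∧ DifferentiableAt ℝ g z ∧
      c - θ ≤ fderiv ℝ g z (b - a) := by
  classical
  set e : EuclideanSpace ℝ (Fin n) := b - a with he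
  set δ : ℝ := θ / (2 * (K : ℝ) + 2) with hδdef
  have hK0 : (0 : ℝ) ≤ (K : ℝ) := K.coe_nonneg
  have hδ : 0 < δ := by positivity
  set B : Set (EuclideanSpace ℝ (Fin n)) := Metric.ball 0 δ with hB
  have hBpos : 0 < volume B := Metric.measure_ball_pos _ _ hδ
  have hBfin : volume B < ⊤ := measure_ball_lt_top
  set μ : Measure (EuclideanSpace ℝ (Fin n)) := (volume B)⁻¹ • volume.restrict B with hμ
  have hac : μ ≪ volume := by
    rw [hμ]
    exact (Measure.absolutelyContinuous_of_le Measure.restrict_le_self).smul_left _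
  haveI : IsProbabilityMeasure μ := by
    constructor
    rw [hμ]
    simp only [Measure.smul_apply, Measure.restrict_apply MeasurableSet.univ,
      Set.univ_inter, smul_eq_mul]
    exact ENNReal.inv_mul_cancel hBpos.ne' hBfin.ne
  have haeB : ∀ᵐ w ∂μ, w ∈ B := by
    rw [hμ]
    exact Measure.ae_smul_measure (ae_restrict_mem measurableSet_ball) _
  set F : ℝ → EuclideanSpace ℝ (Fin n) → ℝ := fun t w => g (a + t • e + w) with hF
  have hcontF : ∀ t : ℝ, Continuous (F t) :=
    fun t => hg.continuous.comp (continuous_add_left _)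
  have Fint : ∀ t : ℝ, Integrable (F t) μ := by
    intro t
    rw [hμ]
    refine Integrable.smul_measure ?_ (ENNReal.inv_ne_top.2 hBpos.ne')
    exact (((hcontF t).continuousOn.integrableOn_compact
      (isCompact_closedBall (0 : EuclideanSpace ℝ (Fin n)) δ)).mono_set
      Metric.ball_subset_closedBall)
  have line : ∀ (w : EuclideanSpace ℝ (Fin n)) (t₀ : ℝ),
      HasDerivAt (fun t : ℝ => a + t • e + w) e t₀ := by
    intro w t₀
    have h1 : HasDerivAt (fun t : ℝ => t • e) ((1 : ℝ) • e) t₀ :=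
      (hasDerivAt_id t₀).smul_const e
    simpa using (h1.const_add a).add_const w
  have hdiffae : ∀ t₀ : ℝ, ∀ᵐ w ∂μ, DifferentiableAt ℝ g (a + t₀ • e + w) := by
    intro t₀
    have hae := hg.ae_differentiableAt (μ := (volume : Measure (EuclideanSpace ℝ (Fin n))))
    rw [ae_iff] at hae ⊢
    refine hac ?_
    have heq : {w : EuclideanSpace ℝ (Fin n) | ¬DifferentiableAt ℝ g (a + t₀ • e + w)}
        = (fun w => (a + t₀ • e) + w) ⁻¹' {z | ¬DifferentiableAt ℝ g z} := rfl
    rw [heq, measure_preimage_add]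
    exact hae
  have key : ∀ t₀ : ℝ, Integrable (fun w => fderiv ℝ g (a + t₀ • e + w) e) μ ∧
      HasDerivAt (fun t => ∫ w, F t w ∂μ)
        (∫ w, fderiv ℝ g (a + t₀ • e + w) e ∂μ) t₀ := by
    intro t₀
    refine hasDerivAt_integral_of_dominated_loc_of_lip (s := Metric.ball t₀ 1)
      (bound := fun _ => ((K * ‖e‖₊ : NNReal) : ℝ)) (Metric.ball_mem_nhds t₀ one_pos) ?_ (Fint t₀) ?_ ?_
      (integrable_const _) ?_
    · exact Eventually.of_forall fun t => (hcontF t).aestronglyMeasurable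
    · exact ((measurable_fderiv_apply_const (𝕜 := ℝ) (f := g) e).comp
        (measurable_id.const_add (a + t₀ • e))).aestronglyMeasurable
    · refine Eventually.of_forall fun w => ?_
      have h1 : LipschitzWith ‖e‖₊ (fun t : ℝ => a + t • e + w) := by
        refine LipschitzWith.of_dist_le_mul fun t s => ?_
        simp only [dist_eq_norm]
        have h2 : a + t • e + w - (a + s • e + w) = (t - s) • e := by
          rw [sub_smul]; abel
        rw [h2, norm_smul]
        simp [Real.norm_eq_abs, mul_comm]
      have h2 : LipschitzWith (K * ‖e‖₊) (fun t : ℝ => g (a + t • e + w)) :=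
        hg.comp h1
      have h3 : LipschitzOnWith (K * ‖e‖₊) (fun t : ℝ => g (a + t • e + w))
          (Metric.ball t₀ 1) := h2.lipschitzOnWith
      have h4 : Real.nnabs ((K * ‖e‖₊ : NNReal) : ℝ) = K * ‖e‖₊ := Real.nnabs_coe _
      rw [h4]
      exact h3
    · filter_upwards [hdiffae t₀] with w hw
      exact hw.hasFDerivAt.comp_hasDerivAt t₀ (line w t₀)
  set h : ℝ → ℝ := fun t => ∫ w, F t w ∂μ with hh
  set I : ℝ → ℝ := fun t => ∫ w, fderiv ℝ g (a + t • e + w) e ∂μ with hI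
  have hcont : Continuous h :=
    continuous_iff_continuousAt.2 fun t => ((key t).2).continuousAt
  obtain ⟨t₀, ht₀, hslope⟩ := exists_hasDerivAt_eq_slope h I one_pos
    hcont.continuousOn (fun t _ => (key t).2)
  have hKδ : ∀ᵐ w ∂μ, g b - (K : ℝ) * δ ≤ F 1 w := by
    filter_upwards [haeB] with w hw
    have hd := hg.dist_le_mul (a + (1 : ℝ) • e + w) b
    have h1 : a + (1 : ℝ) • e + w = b + w := by rw [one_smul, he]; abel
    have h2 : dist (b + w) b = ‖w‖ := by simp [dist_eq_norm]
    rw [h1, h2] at hd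
    have hwδ : ‖w‖ < δ := by simpa [hB, dist_eq_norm] using hw
    have h3 : |g (b + w) - g b| ≤ (K : ℝ) * δ := by
      rw [← Real.dist_eq]
      exact hd.trans (by nlinarith)
    have h4 := abs_le.1 h3
    simp only [hF]
    rw [h1]
    linarith [h4.1]
  have hKδ0 : ∀ᵐ w ∂μ, F 0 w ≤ g a + (K : ℝ) * δ := by
    filter_upwards [haeB] with w hw
    have hd := hg.dist_le_mul (a + (0 : ℝ) • e + w) a
    have h1 : a + (0 : ℝ) • e + w = a + w := by rw [zero_smul]; abel
    have h2 : dist (a + w) a = ‖w‖ := by simp [dist_eq_norm]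
    rw [h1, h2] at hd
    have hwδ : ‖w‖ < δ := by simpa [hB, dist_eq_norm] using hw
    have h3 : |g (a + w) - g a| ≤ (K : ℝ) * δ := by
      rw [← Real.dist_eq]
      exact hd.trans (by nlinarith)
    have h4 := abs_le.1 h3
    simp only [hF]
    rw [h1]
    linarith [h4.2]
  have hint1 : g b - (K : ℝ) * δ ≤ h 1 := by
    have h5 := integral_mono_ae (integrable_const _) (Fint 1) hKδ
    simpa using h5
  have hint0 : h 0 ≤ g a + (K : ℝ) * δ := by
    have h5 := integral_mono_ae (Fint 0) (integrable_const _) hKδ0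
    simpa using h5
  have hIt₀ : c - 2 * (K : ℝ) * δ ≤ I t₀ := by
    rw [hslope]
    have h5 : (h 1 - h 0) / (1 - 0) = h 1 - h 0 := by norm_num
    rw [h5]
    linarith
  have hex : ∃ w ∈ B, DifferentiableAt ℝ g (a + t₀ • e + w) ∧
      c - (2 * (K : ℝ) + 1) * δ ≤ fderiv ℝ g (a + t₀ • e + w) e := by
    by_contra hcon
    push_neg at hcon
    have hub : ∀ᵐ w ∂μ, fderiv ℝ g (a + t₀ • e + w) e ≤ c - (2 * (K : ℝ) + 1) * δ := by
      filter_upwards [haeB, hdiffae t₀] with w hw hdw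
      exact le_of_lt (hcon w hw hdw)
    have h5 := integral_mono_ae ((key t₀).1) (integrable_const _) hub
    simp only [integral_const, measure_univ, probReal_univ, ENNReal.toReal_one, one_smul] at h5
    have h6 : I t₀ ≤ c - (2 * (K : ℝ) + 1) * δ := h5
    linarith
  obtain ⟨w, hwB, hdw, hfd⟩ := hex
  refine ⟨a + t₀ • e + w, ?_, hdw, ?_⟩
  · have h1 : dist (a + t₀ • e + w) a = ‖t₀ • e + w‖ := by
      rw [dist_eq_norm]; congr 1; abel
    rw [h1]
    have h2 : ‖t₀ • e + w‖ ≤ |t₀| * ‖e‖ + ‖w‖ := by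
      calc ‖t₀ • e + w‖ ≤ ‖t₀ • e‖ + ‖w‖ := norm_add_le _ _
        _ = |t₀| * ‖e‖ + ‖w‖ := by rw [norm_smul, Real.norm_eq_abs]
    have hwδ : ‖w‖ < δ := by simpa [hB, dist_eq_norm] using hwB
    have ht01 : |t₀| ≤ 1 := by
      rw [abs_le]; constructor
      · linarith [ht₀.1]
      · linarith [ht₀.2]
    have hdba : dist b a = ‖e‖ := by rw [dist_eq_norm, he]
    have hδθ : δ ≤ θ := by
      rw [hδdef, div_le_iff₀ (by positivity)]
      nlinarith
    have hne : (0:ℝ) ≤ ‖e‖ := norm_nonneg _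
    have h6 : |t₀| * ‖e‖ ≤ 1 * ‖e‖ := mul_le_mul_of_nonneg_right ht01 hne
    rw [hdba]
    linarith
  · have hδθ2 : (2 * (K : ℝ) + 1) * δ ≤ θ := by
      rw [hδdef, mul_comm, div_mul_eq_mul_div, div_le_iff₀ (by positivity)]
      nlinarith
    linarith

/-- In `ℝⁿ`, if `0 ∈ int U_i` for each `i` and `x̄` is a local highly
robust weakly efficient solution with `f_i` locally Lipschitz, then the contingent
cone meets the common negative-polar set of the subdifferentials only at `0`. -/
theorem contingent_cone_inter_polar_eq_zero
    {n p : ℕ} (Ω : Set (EuclideanSpace ℝ (Fin n)))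
    (f : Fin p → EuclideanSpace ℝ (Fin n) → ℝ)
    (U : Fin p → Set (EuclideanSpace ℝ (Fin n)))
    (hU : ∀ i, (0 : EuclideanSpace ℝ (Fin n)) ∈ interior (U i))
    (xb : EuclideanSpace ℝ (Fin n)) (hxb : xb ∈ Ω)
    (hf : ∀ i, ∃ K : NNReal, ∃ ε > (0 : ℝ),
      LipschitzOnWith K (f i) (Metric.ball xb ε))
    (hrob : ∃ δ > (0 : ℝ), ∀ u : Fin p → EuclideanSpace ℝ (Fin n),
      (∀ i, u i ∈ U i) →
      ¬ ∃ x ∈ Ω ∩ Metric.ball xb δ,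
        ∀ i, f i x - (inner ℝ (u i) x : ℝ) < f i xb - (inner ℝ (u i) xb : ℝ)) :
    contingentCone xb Ω ∩
      {d | ∀ i, ∀ v ∈ limitingSubdiff (f i) xb, (inner ℝ v d : ℝ) ≤ 0} = {0} := by
  obtain ⟨δ, hδ, hrob⟩ := hrob
  apply Set.eq_singleton_iff_unique_mem.2
  constructor
  · constructor
    · refine ⟨fun _ => xb, fun k => 1 / (k + 1), fun k => hxb, fun k => by positivity,
        tendsto_one_div_add_atTop_nhds_zero_nat, ?_⟩
      simpa [sub_self] using
        (tendsto_const_nhds : Tendsto (fun _ : ℕ => (0 : EuclideanSpace ℝ (Fin n)))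
          atTop (𝓝 0))
    · intro i v _
      simp [inner_zero_right]
  · rintro d ⟨hdT, hdP⟩
    by_contra hd0
    have hdnorm : (0 : ℝ) < ‖d‖ := norm_pos_iff.2 hd0
    obtain ⟨xs, ts, hxsΩ, hts, hts0, hq⟩ := hdT
    set q : ℕ → EuclideanSpace ℝ (Fin n) := fun k => (ts k)⁻¹ • (xs k - xb) with hqdef
    have hxs_sub : ∀ k, xs k - xb = ts k • q k := fun k =>
      (smul_inv_smul₀ (hts k).ne' _).symm
    have hxs_tendsto : Tendsto xs atTop (𝓝 xb) := by
      have h1 : Tendsto (fun k => ts k • q k) atTop (𝓝 ((0 : ℝ) • d)) := hts0.smul hq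
      rw [zero_smul] at h1
      have h2 : Tendsto (fun k => xb + ts k • q k) atTop (𝓝 (xb + 0)) :=
        tendsto_const_nhds.add h1
      rw [add_zero] at h2
      convert h2 using 2 with k
      rw [← hxs_sub k]; abel
    -- choose perturbations u i
    have hUε : ∀ i, ∃ ε > (0 : ℝ), Metric.ball (0 : EuclideanSpace ℝ (Fin n)) ε ⊆ U i := by
      intro i
      obtain ⟨ε, hε, hsub⟩ := Metric.mem_nhds_iff.1 (mem_interior_iff_mem_nhds.1 (hU i))
      exact ⟨ε, hε, hsub⟩
    choose εU hεU hball using hUε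
    set τ : Fin p → ℝ := fun i => εU i / (2 * ‖d‖) with hτdef
    have hτ : ∀ i, 0 < τ i := fun i => by
      have := hεU i; positivity
    set u : Fin p → EuclideanSpace ℝ (Fin n) := fun i => τ i • d with hudef
    have hu : ∀ i, u i ∈ U i := by
      intro i
      apply hball i
      simp only [Metric.mem_ball, dist_zero_right, hudef, norm_smul, Real.norm_eq_abs,
        abs_of_pos (hτ i), hτdef]
      rw [abs_of_pos (by have := hεU i; positivity)]
      rw [div_mul_eq_mul_div, mul_comm]
      rw [show ‖d‖ * εU i / (2 * ‖d‖) = εU i / 2 * (‖d‖ / ‖d‖) by ring, div_self hdnorm.ne']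
      linarith [hεU i]
    -- one functional must fail the strict decrease, frequently
    have heventual : ∀ᶠ k in atTop, ∃ i,
        (inner ℝ (u i) (xs k - xb) : ℝ) ≤ f i (xs k) - f i xb := by
      filter_upwards [hxs_tendsto (Metric.ball_mem_nhds xb hδ)] with k hk
      by_contra hnone
      push_neg at hnone
      refine hrob u hu ⟨xs k, ⟨hxsΩ k, hk⟩, fun i => ?_⟩
      have h1 := hnone i
      have h2 : (inner ℝ (u i) (xs k) : ℝ) - (inner ℝ (u i) xb : ℝ)
          = (inner ℝ (u i) (xs k - xb) : ℝ) := (inner_sub_right _ _ _).symm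
      linarith
    have hpigeon : ∃ i, ∃ᶠ k in atTop,
        (inner ℝ (u i) (xs k - xb) : ℝ) ≤ f i (xs k) - f i xb := by
      by_contra hc
      push_neg at hc
      have hall : ∀ᶠ k in atTop, ∀ i,
          f i (xs k) - f i xb < (inner ℝ (u i) (xs k - xb) : ℝ) := eventually_all.2 hc
      obtain ⟨k, ⟨i, hik⟩, hk2⟩ := (heventual.and hall).exists
      exact absurd (hk2 i) (not_lt.2 hik)
    obtain ⟨i, hfreq⟩ := hpigeon
    obtain ⟨K, εL, hεL, hlip⟩ := hf i
    obtain ⟨g, hgK, hgeq⟩ := hlip.extend_real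
    -- quantities
    set R : ℕ → ℝ := fun k => τ i * (inner ℝ d (q k) : ℝ) with hRdef
    set c : ℝ := τ i * (inner ℝ d d : ℝ) with hcdef
    have hc0 : 0 < c := by
      rw [hcdef, real_inner_self_eq_norm_mul_norm]
      exact mul_pos (hτ i) (mul_pos hdnorm hdnorm)
    have hRlim : Tendsto R atTop (𝓝 c) :=
      tendsto_const_nhds.mul ((tendsto_const_nhds : Tendsto (fun _ : ℕ => d) _ _).inner hq)
    -- the frequent inequality in terms of R
    have hfreq2 : ∃ᶠ k in atTop, ts k * R k ≤ f i (xs k) - f i xb := by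
      refine hfreq.mono fun k hk => ?_
      have h1 : (inner ℝ (u i) (xs k - xb) : ℝ) = ts k * R k := by
        rw [hxs_sub k, hudef, hRdef]
        simp only [real_inner_smul_left, real_inner_smul_right]
        try ring
      linarith [hk, h1.symm.le]
    -- eventual smallness conditions
    have hev : ∀ᶠ k in atTop, xs k ∈ Metric.ball xb (εL / 2) ∧ ts k ≤ min 1 (εL / 4) := by
      have h1 : ∀ᶠ k in atTop, xs k ∈ Metric.ball xb (εL / 2) :=
        hxs_tendsto (Metric.ball_mem_nhds xb (by linarith : (0:ℝ) < εL / 2))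
      have h2 : ∀ᶠ k in atTop, ts k ≤ min 1 (εL / 4) :=
        (hts0.eventually (eventually_le_nhds (by positivity : (0:ℝ) < min 1 (εL/4)))).mono
          fun k hk => hk
      exact h1.and h2
    obtain ⟨φ, hφ, hφprop⟩ := extraction_of_frequently_atTop (hfreq2.and_eventually hev)
    -- apply the mean value inequality
    have hxbball : xb ∈ Metric.ball xb εL := Metric.mem_ball_self hεL
    have hgineq : ∀ k, ts (φ k) * R (φ k) ≤ g (xs (φ k)) - g xb := by
      intro k
      obtain ⟨h1, h2, _⟩ := hφprop k
      have hyball : xs (φ k) ∈ Metric.ball xb εL :=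
        Metric.ball_subset_ball (by linarith) h2
      rw [← hgeq hyball, ← hgeq hxbball]
      exact h1
    have hθpos : ∀ k, 0 < ts (φ k) * ts (φ k) := fun k =>
      mul_pos (hts (φ k)) (hts (φ k))
    choose z hz1 hz2 hz3 using fun k =>
      exists_diff_point hgK xb (xs (φ k)) (hθpos k) (hgineq k)
    -- z k stays in the ball
    have hzball : ∀ k, z k ∈ Metric.ball xb εL := by
      intro k
      obtain ⟨_, h2, h3⟩ := hφprop k
      have ht1 : ts (φ k) ≤ 1 := le_trans h3 (min_le_left _ _)
      have ht2 : ts (φ k) ≤ εL / 4 := le_trans h3 (min_le_right _ _)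
      have ht3 : ts (φ k) * ts (φ k) ≤ εL / 4 := by nlinarith [hts (φ k)]
      have h4 : dist (xs (φ k)) xb < εL / 2 := h2
      have := hz1 k
      rw [Metric.mem_ball]
      linarith
    -- the subgradients
    set v : ℕ → EuclideanSpace ℝ (Fin n) := fun k =>
      (InnerProductSpace.toDual ℝ (EuclideanSpace ℝ (Fin n))).symm (fderiv ℝ g (z k))
      with hvdef
    have hvF : ∀ k, v k ∈ frechetSubdiff (f i) (z k) := by
      intro k
      refine frechetSubdiff_congr ?_ (fderiv_mem_frechetSubdiff (hz2 k))
      exact Filter.eventuallyEq_of_mem (Metric.isOpen_ball.mem_nhds (hzball k)) hgeq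
    have hvbound : ∀ k, v k ∈ Metric.closedBall (0 : EuclideanSpace ℝ (Fin n)) K := by
      intro k
      rw [Metric.mem_closedBall, dist_zero_right, hvdef]
      rw [LinearIsometryEquiv.norm_map]
      exact norm_fderiv_le_of_lipschitz ℝ hgK
    obtain ⟨vlim, _, ψ, hψ, hvconv⟩ :=
      tendsto_subseq_of_bounded Metric.isBounded_closedBall hvbound
    -- z tends to xb
    have hztend : Tendsto z atTop (𝓝 xb) := by
      rw [tendsto_iff_dist_tendsto_zero]
      have hub : ∀ k, dist (z k) xb ≤ dist (xs (φ k)) xb + ts (φ k) * ts (φ k) := hz1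
      have hlim : Tendsto (fun k => dist (xs (φ k)) xb + ts (φ k) * ts (φ k)) atTop (𝓝 0) := by
        have h1 : Tendsto (fun k => xs (φ k)) atTop (𝓝 xb) :=
          hxs_tendsto.comp hφ.tendsto_atTop
        have h2 : Tendsto (fun k => dist (xs (φ k)) xb) atTop (𝓝 0) :=
          tendsto_iff_dist_tendsto_zero.1 h1
        have h3 : Tendsto (fun k => ts (φ k)) atTop (𝓝 0) :=
          hts0.comp hφ.tendsto_atTop
        have h4 := h2.add (h3.mul h3)
        simpa using h4
      exact squeeze_zero (fun k => dist_nonneg) hub hlim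
    -- vlim is a limiting subgradient
    have hvlim : vlim ∈ limitingSubdiff (f i) xb :=
      ⟨z ∘ ψ, v ∘ ψ, fun k => hvF (ψ k), hztend.comp hψ.tendsto_atTop, hvconv⟩
    have hle := hdP i vlim hvlim
    -- lower bound on inner vlim d
    have hlower : ∀ k, R (φ (ψ k)) - ts (φ (ψ k)) ≤ (inner ℝ (v (ψ k)) (q (φ (ψ k))) : ℝ) := by
      intro k
      have h1 := hz3 (ψ k)
      have h2 : (inner ℝ (v (ψ k)) (q (φ (ψ k))) : ℝ)
          = fderiv ℝ g (z (ψ k)) (q (φ (ψ k))) := InnerProductSpace.toDual_symm_apply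
      have h3 : fderiv ℝ g (z (ψ k)) (xs (φ (ψ k)) - xb)
          = ts (φ (ψ k)) * fderiv ℝ g (z (ψ k)) (q (φ (ψ k))) := by
        rw [hxs_sub (φ (ψ k)), (fderiv ℝ g (z (ψ k))).map_smul]
        simp
      rw [h3] at h1
      rw [h2]
      have htp := hts (φ (ψ k))
      nlinarith [h1, htp]
    have hRHS : Tendsto (fun k => R (φ (ψ k)) - ts (φ (ψ k))) atTop (𝓝 c) := by
      have h1 : Tendsto (fun k => R (φ (ψ k))) atTop (𝓝 c) :=
        hRlim.comp ((hφ.comp hψ).tendsto_atTop)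
      have h2 : Tendsto (fun k => ts (φ (ψ k))) atTop (𝓝 0) :=
        hts0.comp ((hφ.comp hψ).tendsto_atTop)
      simpa using h1.sub h2
    have hLHS : Tendsto (fun k => (inner ℝ (v (ψ k)) (q (φ (ψ k))) : ℝ)) atTop
        (𝓝 (inner ℝ vlim d : ℝ)) := by
      exact hvconv.inner (hq.comp ((hφ.comp hψ).tendsto_atTop))
    have hfinal : c ≤ (inner ℝ vlim d : ℝ) :=
      le_of_tendsto_of_tendsto' hRHS hLHS hlower
    linarith
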